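/- Let (X,d) be a uniformly locally finite metric space and T a bounded operator on ℓ²(X) with finite propagation, say propagation at most R (meaning ⟨δ_x, T δ_y⟩ = 0 whenever d(x,y) > R). Then for any ultrafilter ω and any galaxy G of X^ω, the operator T_G on ℓ²(G) with kernel k_{T_G}([x_i],[y_i]) = lim_{i→ω} ⟨δ_{x_i}, T δ_{y_i}⟩ is a well-defined bounded operator with propagation at most R with respect to the pseudo-metric st∘d^ω. -/

import Mathlib

noncomputable section
open scoped ENNReal
open Filter

/-- The Hilbert space ℓ²(X). -/
abbrev L2 (X : Type*) := lp (fun _ : X => ℂ) 2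

/-- The Dirac function δ_x ∈ ℓ²(X). -/
noncomputable def dirac {X : Type*} (x : X) : L2 X := by
  classical exact lp.single 2 x 1

open scoped ComplexConjugate

private lemma norm_dirac {X : Type*} (x : X) : ‖dirac x‖ = 1 := by
  classical
  rw [dirac]
  have h2 : (0:ℝ) < (2 : ℝ≥0∞).toReal := by norm_num
  simpa using lp.norm_single (E := fun _ : X => ℂ) h2 (fun _ => (1:ℂ)) x

private lemma kernel_bound {X : Type*} (T : L2 X →L[ℂ] L2 X) (x y : X) :
    ‖(inner ℂ (dirac x) (T (dirac y)) : ℂ)‖ ≤ ‖T‖ := by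
  calc ‖(inner ℂ (dirac x) (T (dirac y)) : ℂ)‖ ≤ ‖dirac x‖ * ‖T (dirac y)‖ :=
        norm_inner_le_norm _ _
    _ ≤ 1 * (‖T‖ * ‖dirac y‖) := by
        gcongr
        · exact (norm_dirac x).le
        · exact T.le_opNorm _
    _ = ‖T‖ := by rw [norm_dirac]; ring

private lemma exists_ultralim {I : Type*} (ω : Ultrafilter I) (f : I → ℂ) (C : ℝ)
    (h : ∀ i, ‖f i‖ ≤ C) : ∃ c, Filter.Tendsto f ω (nhds c) := by
  have hc : IsCompact (Metric.closedBall (0:ℂ) C) := isCompact_closedBall _ _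
  have hle : ↑(Ultrafilter.map f ω) ≤ Filter.principal (Metric.closedBall (0:ℂ) C) := by
    rw [le_principal_iff]
    exact Filter.eventually_map.2 (Filter.Eventually.of_forall fun i => by
      simpa [Metric.mem_closedBall, dist_zero_right] using h i)
  obtain ⟨c, -, hc'⟩ := hc.ultrafilter_le_nhds _ hle
  exact ⟨c, hc'⟩

private lemma inner_dirac_dirac {X : Type*} [DecidableEq X] (x y : X) :
    (inner ℂ (dirac x) (dirac y) : ℂ) = if x = y then 1 else 0 := by
  classical
  simp only [dirac, lp.inner_single_left, lp.single_apply, RCLike.inner_apply, map_one, one_mul]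
  simp [eq_comm, Pi.single_apply]

private lemma inner_dirac_left {X : Type*} (x : X) (f : L2 X) :
    (inner ℂ (dirac x) f : ℂ) = f x := by
  classical
  simp [dirac, lp.inner_single_left, RCLike.inner_apply]

private lemma inner_dirac_right {X : Type*} (f : L2 X) (y : X) :
    (inner ℂ f (dirac y) : ℂ) = conj (f y) := by
  classical
  simp [dirac, lp.inner_single_right, RCLike.inner_apply]

private lemma inner_sum_dirac {X Y : Type*} (s : Finset Y)
    (u : Y → X) (hu : Set.InjOn u s) (a b : Y → ℂ) :
    (inner ℂ (∑ x ∈ s, a x • dirac (u x)) (∑ y ∈ s, b y • dirac (u y)) : ℂ)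
      = ∑ x ∈ s, conj (a x) * b x := by
  classical
  rw [sum_inner]
  refine Finset.sum_congr rfl fun x hx => ?_
  rw [inner_sum]
  have h : ∀ y ∈ s, (inner ℂ (a x • dirac (u x)) (b y • dirac (u y)) : ℂ)
      = if y = x then conj (a x) * b x else 0 := by
    intro y hy
    rcases eq_or_ne y x with rfl | hyx
    · rw [inner_smul_left, inner_smul_right, inner_dirac_dirac, if_pos rfl, if_pos rfl]; ring
    · have hne : u x ≠ u y := fun hc =>
        hyx (hu (Finset.mem_coe.2 hx) (Finset.mem_coe.2 hy) hc).symm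
      rw [inner_smul_left, inner_smul_right, inner_dirac_dirac, if_neg hne, if_neg hyx]; ring
  rw [Finset.sum_congr rfl h, Finset.sum_ite_eq' s x]
  simp [hx]

private lemma norm_sum_dirac {X Y : Type*} (s : Finset Y)
    (u : Y → X) (hu : Set.InjOn u s) (a : Y → ℂ) :
    ‖∑ x ∈ s, a x • dirac (u x)‖ = Real.sqrt (∑ x ∈ s, ‖a x‖ ^ 2) := by
  have h := inner_sum_dirac s u hu a a
  have h2 : (inner ℂ (∑ x ∈ s, a x • dirac (u x)) (∑ x ∈ s, a x • dirac (u x)) : ℂ)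
      = ((∑ x ∈ s, ‖a x‖ ^ 2 : ℝ) : ℂ) := by
    rw [h]; push_cast
    exact Finset.sum_congr rfl fun x _ => by
      rw [mul_comm, RCLike.mul_conj]; norm_cast
  rw [@norm_eq_sqrt_re_inner ℂ, h2]
  simp [← Complex.ofReal_pow]

private lemma sq_bound {A B : ℝ} (hA : 0 ≤ A) (hB : 0 ≤ B)
    (h : A ≤ B * Real.sqrt A) : A ≤ B ^ 2 := by
  nlinarith [Real.sq_sqrt hA, Real.sqrt_nonneg A, sq_nonneg (B - Real.sqrt A)]

private lemma sum_sq_le {X : Type*} (g : lp (fun _ : X => ℂ) 2) (t : Finset X) :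
    ∑ y ∈ t, ‖g y‖ ^ 2 ≤ ‖g‖ ^ 2 := by
  have hp : (0:ℝ) < (2 : ℝ≥0∞).toReal := by norm_num
  have h := lp.sum_rpow_le_norm_rpow hp g t
  simpa [Real.rpow_natCast] using h

private lemma lp_norm_le_of_sum {X : Type*} (f : lp (fun _ : X => ℂ) 2) (C : ℝ) (hC : 0 ≤ C)
    (h : ∀ s : Finset X, ∑ x ∈ s, ‖f x‖ ^ 2 ≤ C ^ 2) : ‖f‖ ≤ C := by
  have hp : (0:ℝ) < (2 : ℝ≥0∞).toReal := by norm_num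
  rw [lp.norm_eq_tsum_rpow hp]
  have hsum : (∑' x, ‖f x‖ ^ (2 : ℝ≥0∞).toReal) ≤ C ^ 2 := by
    refine Summable.tsum_le_of_sum_le ((lp.memℓp f).summable hp) fun s => ?_
    calc ∑ x ∈ s, ‖f x‖ ^ (2 : ℝ≥0∞).toReal = ∑ x ∈ s, ‖f x‖ ^ 2 := by
          refine Finset.sum_congr rfl fun x _ => ?_
          simp [Real.rpow_natCast]
      _ ≤ C ^ 2 := h s
  have h1 : (∑' x, ‖f x‖ ^ (2 : ℝ≥0∞).toReal) ^ (1 / (2 : ℝ≥0∞).toReal)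
      ≤ (C ^ 2) ^ ((1:ℝ) / 2) := by
    have := Real.rpow_le_rpow (tsum_nonneg fun x => Real.rpow_nonneg (norm_nonneg _) _)
      hsum (by norm_num : (0:ℝ) ≤ 1/2)
    simpa using this
  refine h1.trans ?_
  rw [← Real.rpow_natCast C 2, ← Real.rpow_mul hC]
  norm_num

private lemma norm_hasSum_le {Y : Type*} {h : Y → ℂ} {L : ℂ} {C : ℝ} (hL : HasSum h L)
    (hb : ∀ t : Finset Y, ‖∑ y ∈ t, h y‖ ≤ C) : ‖L‖ ≤ C :=
  le_of_tendsto ((continuous_norm.tendsto L).comp hL) (Filter.Eventually.of_forall hb)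


set_option maxHeartbeats 1000000 in
/-- If T ∈ B(ℓ²(X)) has propagation at most R on a uniformly locally finite
metric space X, then on every galaxy G of X^ω the limit operator T_G, whose kernel is the
ω-limit of the kernel of T, is a well-defined bounded operator of propagation at most R
for the standard-part pseudo-metric. -/
theorem limit_operator_finite_propagation {X I : Type*} [MetricSpace X] (ω : Ultrafilter I)
    (hULF : ∀ R : ℝ, 0 < R → ∃ N : ℕ, ∀ x : X,
      (Metric.closedBall x R).Finite ∧ (Metric.closedBall x R).ncard ≤ N)
    (T : L2 X →L[ℂ] L2 X) (R : ℝ) (hR : 0 ≤ R)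
    (hT : ∀ x y : X, R < dist x y → @inner ℂ _ _ (dirac x) (T (dirac y)) = 0)
    (G : Set ((ω : Filter I).Germ X))
    (hG : ∀ x ∈ G, ∀ y ∈ G, ∃ c : ℝ,
      Filter.Germ.map₂ dist x y ≤ ((fun _ => c : I → ℝ) : (ω : Filter I).Germ ℝ)) :
    ∃ S : lp (fun _ : G => ℂ) 2 →L[ℂ] lp (fun _ : G => ℂ) 2,
      -- the kernel of S is the ω-limit of the kernel of T
      (∀ (x y : I → X) (hx : (x : (ω : Filter I).Germ X) ∈ G)
          (hy : (y : (ω : Filter I).Germ X) ∈ G),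
        Filter.Tendsto (fun i => @inner ℂ _ _ (dirac (x i)) (T (dirac (y i))))
          (ω : Filter I)
          (nhds (@inner ℂ _ _ (dirac (⟨_, hx⟩ : G)) (S (dirac (⟨_, hy⟩ : G)))))) ∧
      -- S has propagation at most R with respect to st ∘ d^ω
      (∀ (x y : I → X) (hx : (x : (ω : Filter I).Germ X) ∈ G)
          (hy : (y : (ω : Filter I).Germ X) ∈ G) (r : ℝ),
        Filter.Tendsto (fun i => dist (x i) (y i)) (ω : Filter I) (nhds r) → R < r →
          @inner ℂ _ _ (dirac (⟨_, hx⟩ : G)) (S (dirac (⟨_, hy⟩ : G))) = 0) := by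
  classical
  let rep : G → I → X := fun x => Quotient.out (x : (ω : Filter I).Germ X)
  have hrep : ∀ x : G, ((rep x : I → X) : (ω : Filter I).Germ X) = (x : (ω : Filter I).Germ X) := fun x => Quotient.out_eq' _
  have hbd : ∀ x y : G, ∃ c, Tendsto
      (fun i => (inner ℂ (dirac (rep x i)) (T (dirac (rep y i))) : ℂ)) ω (nhds c) :=
    fun x y => exists_ultralim ω _ ‖T‖ fun i => kernel_bound T _ _
  let κ : G → G → ℂ := fun x y => (hbd x y).choose
  have hκ : ∀ x y : G, Tendsto
      (fun i => (inner ℂ (dirac (rep x i)) (T (dirac (rep y i))) : ℂ)) ω (nhds (κ x y)) :=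
    fun x y => (hbd x y).choose_spec
  -- a.e. agreement of representatives
  have hrep_ae : ∀ (x : I → X) (hx : (x : (ω : Filter I).Germ X) ∈ G), (rep ⟨(x : (ω : Filter I).Germ X), hx⟩) =ᶠ[(ω : Filter I)] x := by
    intro x hx
    exact Filter.Germ.coe_eq.mp (hrep ⟨(x : (ω : Filter I).Germ X), hx⟩)
  have hconv : ∀ (x y : I → X) (hx : (x : (ω : Filter I).Germ X) ∈ G) (hy : (y : (ω : Filter I).Germ X) ∈ G),
      Tendsto (fun i => (inner ℂ (dirac (x i)) (T (dirac (y i))) : ℂ)) ω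
        (nhds (κ ⟨(x : (ω : Filter I).Germ X), hx⟩ ⟨(y : (ω : Filter I).Germ X), hy⟩)) := by
    intro x y hx hy
    refine (hκ _ _).congr' ?_
    filter_upwards [hrep_ae x hx, hrep_ae y hy] with i h1 h2
    rw [h1, h2]
  have hneq : ∀ x y : G, x ≠ y → ∀ᶠ i in (ω : Filter I), rep x i ≠ rep y i := by
    intro x y hxy
    have h2 : ¬ ((rep x) =ᶠ[(ω : Filter I)] (rep y)) := by
      rw [← Filter.Germ.coe_eq, hrep x, hrep y]
      exact fun h => hxy (Subtype.ext h)
    exact (Ultrafilter.eventually_not).2 h2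
  have hinj : ∀ s : Finset G, ∀ᶠ i in (ω : Filter I),
      Set.InjOn (fun x : G => rep x i) ↑s := by
    intro s
    have h : ∀ᶠ i in (ω : Filter I), ∀ x ∈ s, ∀ y ∈ s, x ≠ y → rep x i ≠ rep y i := by
      rw [eventually_all_finset]
      intro x _
      rw [eventually_all_finset]
      intro y _
      rcases eq_or_ne x y with rfl | hxy
      · exact Eventually.of_forall fun i h => absurd rfl h
      · filter_upwards [hneq x y hxy] with i h _
        exact h
    filter_upwards [h] with i h x hx y hy heq
    by_contra hne
    exact h x (Finset.mem_coe.1 hx) y (Finset.mem_coe.1 hy) hne heq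
  -- the key bilinear estimate
  have hbil : ∀ (s t : Finset G) (a b : G → ℂ),
      ‖∑ x ∈ s, ∑ y ∈ t, conj (a x) * (κ x y * b y)‖ ≤
        ‖T‖ * (Real.sqrt (∑ x ∈ s, ‖a x‖ ^ 2) * Real.sqrt (∑ y ∈ t, ‖b y‖ ^ 2)) := by
    intro s t a b
    have h1 : Tendsto (fun i => ∑ x ∈ s, ∑ y ∈ t,
        conj (a x) * ((inner ℂ (dirac (rep x i)) (T (dirac (rep y i))) : ℂ) * b y))
        (ω : Filter I) (nhds (∑ x ∈ s, ∑ y ∈ t, conj (a x) * (κ x y * b y))) := by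
      refine tendsto_finset_sum _ fun x _ => tendsto_finset_sum _ fun y _ => ?_
      exact ((hκ x y).mul_const (b y)).const_mul (conj (a x))
    refine le_of_tendsto (h1.norm) ?_
    filter_upwards [hinj s, hinj t] with i hs ht
    have heq : ∑ x ∈ s, ∑ y ∈ t,
        conj (a x) * ((inner ℂ (dirac (rep x i)) (T (dirac (rep y i))) : ℂ) * b y)
        = (inner ℂ (∑ x ∈ s, a x • dirac (rep x i))
            (T (∑ y ∈ t, b y • dirac (rep y i))) : ℂ) := by
      rw [map_sum, sum_inner]
      refine Finset.sum_congr rfl fun x _ => ?_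
      rw [inner_smul_left, inner_sum, Finset.mul_sum]
      refine Finset.sum_congr rfl fun y _ => ?_
      rw [map_smul, inner_smul_right]
      ring
    rw [heq]
    calc ‖(inner ℂ (∑ x ∈ s, a x • dirac (rep x i))
            (T (∑ y ∈ t, b y • dirac (rep y i))) : ℂ)‖
        ≤ ‖∑ x ∈ s, a x • dirac (rep x i)‖ * ‖T (∑ y ∈ t, b y • dirac (rep y i))‖ :=
          norm_inner_le_norm _ _
      _ ≤ ‖∑ x ∈ s, a x • dirac (rep x i)‖ * (‖T‖ * ‖∑ y ∈ t, b y • dirac (rep y i)‖) := by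
          gcongr
          exact T.le_opNorm _
      _ = ‖T‖ * (Real.sqrt (∑ x ∈ s, ‖a x‖ ^ 2) * Real.sqrt (∑ y ∈ t, ‖b y‖ ^ 2)) := by
          rw [norm_sum_dirac s _ hs, norm_sum_dirac t _ ht]
          ring
  -- rows are ℓ²
  have hrow_sum : ∀ (x : G) (t : Finset G), ∑ y ∈ t, ‖κ x y‖ ^ 2 ≤ ‖T‖ ^ 2 := by
    intro x t
    have h := hbil {x} t (fun _ => 1) (fun y => conj (κ x y))
    simp only [Finset.sum_singleton, map_one, one_mul] at h
    have hL : ∑ y ∈ t, κ x y * conj (κ x y) = ((∑ y ∈ t, ‖κ x y‖ ^ 2 : ℝ) : ℂ) := by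
      push_cast
      exact Finset.sum_congr rfl fun y _ => by rw [RCLike.mul_conj]; norm_cast
    rw [hL] at h
    have hA : (0:ℝ) ≤ ∑ y ∈ t, ‖κ x y‖ ^ 2 :=
      Finset.sum_nonneg fun _ _ => sq_nonneg _
    rw [Complex.norm_real, Real.norm_eq_abs, abs_of_nonneg hA] at h
    have hconj : ∑ y ∈ t, ‖conj (κ x y)‖ ^ 2 = ∑ y ∈ t, ‖κ x y‖ ^ 2 := by
      simp
    rw [hconj] at h
    refine sq_bound hA (norm_nonneg T) ?_
    calc ∑ y ∈ t, ‖κ x y‖ ^ 2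
        ≤ ‖T‖ * (Real.sqrt (‖(1:ℂ)‖ ^ 2) * Real.sqrt (∑ y ∈ t, ‖κ x y‖ ^ 2)) := h
      _ = ‖T‖ * Real.sqrt (∑ y ∈ t, ‖κ x y‖ ^ 2) := by
          rw [norm_one, one_pow, Real.sqrt_one, one_mul]
  have hrow_mem : ∀ x : G, Memℓp (fun y : G => conj (κ x y)) 2 := by
    intro x
    refine memℓp_gen' (C := ‖T‖ ^ 2) fun t => ?_
    calc ∑ y ∈ t, ‖conj (κ x y)‖ ^ (2 : ℝ≥0∞).toReal
        = ∑ y ∈ t, ‖κ x y‖ ^ 2 := by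
          refine Finset.sum_congr rfl fun y _ => ?_
          simp [Real.rpow_natCast]
      _ ≤ ‖T‖ ^ 2 := hrow_sum x t
  let row : G → lp (fun _ : G => ℂ) 2 := fun x => ⟨fun y => conj (κ x y), hrow_mem x⟩
  -- column estimate
  have hcol : ∀ (g : lp (fun _ : G => ℂ) 2) (s : Finset G),
      ∑ x ∈ s, ‖(inner ℂ (row x) g : ℂ)‖ ^ 2 ≤ (‖T‖ * ‖g‖) ^ 2 := by
    intro g s
    set c : G → ℂ := fun x => inner ℂ (row x) g with hc
    have hA : (0:ℝ) ≤ ∑ x ∈ s, ‖c x‖ ^ 2 := Finset.sum_nonneg fun _ _ => sq_nonneg _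
    have hhs : HasSum (fun y : G => ∑ x ∈ s, conj (c x) * (inner ℂ ((row x) y) (g y) : ℂ))
        (∑ x ∈ s, conj (c x) * (inner ℂ (row x) g : ℂ)) := by
      refine hasSum_sum fun x _ => ?_
      exact (lp.hasSum_inner (row x) g).mul_left (conj (c x))
    have hval : ∑ x ∈ s, conj (c x) * (inner ℂ (row x) g : ℂ)
        = ((∑ x ∈ s, ‖c x‖ ^ 2 : ℝ) : ℂ) := by
      push_cast
      refine Finset.sum_congr rfl fun x _ => ?_
      rw [mul_comm, RCLike.mul_conj]; norm_cast
    rw [hval] at hhs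
    have hnorm : ‖((∑ x ∈ s, ‖c x‖ ^ 2 : ℝ) : ℂ)‖
        ≤ (‖T‖ * ‖g‖) * Real.sqrt (∑ x ∈ s, ‖c x‖ ^ 2) := by
      refine norm_hasSum_le hhs fun t => ?_
      have hswap : ∑ y ∈ t, ∑ x ∈ s, conj (c x) * (inner ℂ ((row x) y) (g y) : ℂ)
          = ∑ x ∈ s, ∑ y ∈ t, conj (c x) * (κ x y * g y) := by
        rw [Finset.sum_comm]
        refine Finset.sum_congr rfl fun x _ => Finset.sum_congr rfl fun y _ => ?_
        have : (inner ℂ ((row x) y) (g y) : ℂ) = κ x y * g y := by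
          have hry : (row x) y = conj (κ x y) := rfl
          rw [hry, RCLike.inner_apply, RCLike.conj_conj]; ring
        rw [this]
      rw [hswap]
      refine (hbil s t c g).trans ?_
      have h2 : Real.sqrt (∑ y ∈ t, ‖g y‖ ^ 2) ≤ ‖g‖ := by
        refine Real.sqrt_le_sqrt (sum_sq_le g t) |>.trans ?_
        rw [Real.sqrt_sq (norm_nonneg g)]
      calc ‖T‖ * (Real.sqrt (∑ x ∈ s, ‖c x‖ ^ 2) * Real.sqrt (∑ y ∈ t, ‖g y‖ ^ 2))
          ≤ ‖T‖ * (Real.sqrt (∑ x ∈ s, ‖c x‖ ^ 2) * ‖g‖) := by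
            gcongr
        _ = (‖T‖ * ‖g‖) * Real.sqrt (∑ x ∈ s, ‖c x‖ ^ 2) := by ring
    rw [Complex.norm_real, Real.norm_eq_abs, abs_of_nonneg hA] at hnorm
    exact sq_bound hA (mul_nonneg (norm_nonneg T) (norm_nonneg g)) hnorm
  have hSmem : ∀ g : lp (fun _ : G => ℂ) 2,
      Memℓp (fun x : G => (inner ℂ (row x) g : ℂ)) 2 := by
    intro g
    refine memℓp_gen' (C := (‖T‖ * ‖g‖) ^ 2) fun s => ?_
    calc ∑ x ∈ s, ‖(inner ℂ (row x) g : ℂ)‖ ^ (2 : ℝ≥0∞).toReal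
        = ∑ x ∈ s, ‖(inner ℂ (row x) g : ℂ)‖ ^ 2 := by
          refine Finset.sum_congr rfl fun x _ => ?_
          simp [Real.rpow_natCast]
      _ ≤ (‖T‖ * ‖g‖) ^ 2 := hcol g s
  let Sfun : lp (fun _ : G => ℂ) 2 → lp (fun _ : G => ℂ) 2 :=
    fun g => ⟨fun x => (inner ℂ (row x) g : ℂ), hSmem g⟩
  have hSapp : ∀ (g : lp (fun _ : G => ℂ) 2) (x : G),
      (Sfun g : ∀ _ : G, ℂ) x = (inner ℂ (row x) g : ℂ) := fun g x => rfl
  have hSnorm : ∀ g, ‖Sfun g‖ ≤ ‖T‖ * ‖g‖ := by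
    intro g
    refine lp_norm_le_of_sum _ _ (mul_nonneg (norm_nonneg T) (norm_nonneg g)) fun s => ?_
    calc ∑ x ∈ s, ‖(Sfun g : ∀ _ : G, ℂ) x‖ ^ 2
        = ∑ x ∈ s, ‖(inner ℂ (row x) g : ℂ)‖ ^ 2 := rfl
      _ ≤ (‖T‖ * ‖g‖) ^ 2 := hcol g s
  let Slin : lp (fun _ : G => ℂ) 2 →ₗ[ℂ] lp (fun _ : G => ℂ) 2 :=
    { toFun := Sfun
      map_add' := fun g h => by
        refine lp.ext (funext fun x => ?_)
        simp only [hSapp, lp.coeFn_add, Pi.add_apply, hSapp]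
        exact inner_add_right _ _ _
      map_smul' := fun a g => by
        refine lp.ext (funext fun x => ?_)
        simp only [hSapp, lp.coeFn_smul, Pi.smul_apply, RingHom.id_apply]
        exact inner_smul_right _ _ _ }
  let S : lp (fun _ : G => ℂ) 2 →L[ℂ] lp (fun _ : G => ℂ) 2 :=
    LinearMap.mkContinuous Slin ‖T‖ hSnorm
  have hker : ∀ x y : G, (inner ℂ (dirac x) (S (dirac y)) : ℂ) = κ x y := by
    intro x y
    rw [inner_dirac_left]
    have h2 : (S (dirac y) : ∀ _ : G, ℂ) x = (inner ℂ (row x) (dirac y) : ℂ) := rfl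
    rw [h2, inner_dirac_right]
    have h3 : (row x) y = conj (κ x y) := rfl
    rw [h3, RCLike.conj_conj]
  refine ⟨S, ?_, ?_⟩
  · intro x y hx hy
    have := hconv x y hx hy
    rwa [← hker ⟨(x : (ω : Filter I).Germ X), hx⟩ ⟨(y : (ω : Filter I).Germ X), hy⟩] at this
  · intro x y hx hy r hr hRr
    rw [hker]
    have he : ∀ᶠ i in (ω : Filter I), (inner ℂ (dirac (x i)) (T (dirac (y i))) : ℂ) = 0 := by
      filter_upwards [hr.eventually (eventually_gt_nhds hRr)] with i hi
      exact hT _ _ hi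
    have h0 : Tendsto (fun i => (inner ℂ (dirac (x i)) (T (dirac (y i))) : ℂ))
        (ω : Filter I) (nhds 0) :=
      Filter.Tendsto.congr' (EventuallyEq.symm he) tendsto_const_nhds
    exact tendsto_nhds_unique (hconv x y hx hy) h0
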